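/- Let n ≥ 1 and let E be a weakly connected digraph on Fin N. Assume that every maximal strong component of E has at least n + 1 elements and that some maximal strong component of E has exactly n + 1 elements. Then the set Q := {x : Fin N → EuclideanSpace ℝ (Fin n) | for every maximal strong component C of E, affineSpan ℝ (x '' C) = ⊤} is nonempty and is not path-connected. -/

import Mathlib

open Matrix

/-- Coordinates of Euclidean space as a linear equivalence. -/
noncomputable abbrev eqE (n : ℕ) : EuclideanSpace ℝ (Fin n) ≃ₗ[ℝ] (Fin n → ℝ) :=
  WithLp.linearEquiv 2 ℝ (Fin n → ℝ)

lemma aux_moment_affineIndependent {n : ℕ} (s : Fin (n + 1) → ℝ) (hs : Function.Injective s) :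
    AffineIndependent ℝ (fun i => (eqE n).symm (fun j => s i ^ ((j : ℕ) + 1))) := by
  classical
  rw [affineIndependent_iff]
  intro t w hw0 hws
  set w' : Fin (n + 1) → ℝ := fun i => if i ∈ t then w i else 0 with hw'
  have hrows : LinearIndependent ℝ (fun i => Matrix.vandermonde s i) :=
    Matrix.linearIndependent_rows_iff_isUnit.mpr ((Matrix.isUnit_iff_isUnit_det _).mpr
      (isUnit_iff_ne_zero.mpr (Matrix.det_vandermonde_ne_zero_iff.mpr hs)))
  have hsum : ∑ i, w' i • Matrix.vandermonde s i = 0 := by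
    funext j
    rw [Finset.sum_apply]
    simp only [Pi.smul_apply, smul_eq_mul, Matrix.vandermonde_apply, Pi.zero_apply]
    induction j using Fin.cases with
    | zero =>
      simp only [Fin.val_zero, pow_zero, mul_one, w']
      rw [Finset.sum_ite_mem, Finset.univ_inter]
      exact hw0
    | succ k =>
      have h2 : ∑ e ∈ t, w e * s e ^ ((k : ℕ) + 1) = 0 := by
        have h1 := congrArg (eqE n) hws
        rw [map_sum, map_zero] at h1
        simp only [_root_.map_smul, LinearEquiv.apply_symm_apply] at h1
        have h3 := congrFun h1 k
        simpa using h3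
      simp only [Fin.val_succ, w', ite_mul, zero_mul]
      rw [Finset.sum_ite_mem, Finset.univ_inter]
      exact h2
  have hz := Fintype.linearIndependent_iff.mp hrows w' hsum
  intro e he
  have := hz e
  simpa [w', he] using this

/-- The moment curve configuration affinely spans on any set with at least `n+1` elements. -/
lemma aux_moment_span {n N : ℕ} (C : Set (Fin N)) (h : n + 1 ≤ C.ncard) :
    affineSpan ℝ
      ((fun i : Fin N => (eqE n).symm (fun j => ((i : ℕ) : ℝ) ^ ((j : ℕ) + 1))) '' C) = ⊤ := by
  obtain ⟨t, htC, htcard⟩ := Set.exists_subset_card_eq h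
  have hfin : Nat.card t = n + 1 := by rw [Nat.card_coe_set_eq, htcard]
  let e : t ≃ Fin (n + 1) := Finite.equivFinOfCardEq hfin
  set c : Fin (n + 1) → Fin N := fun i => (e.symm i : Fin N) with hc
  have hcinj : Function.Injective c := fun a b hab => by
    have := Subtype.coe_injective (p := (· ∈ t)) hab
    simpa using congrArg e this
  have hsinj : Function.Injective (fun i => ((c i : ℕ) : ℝ)) := by
    intro a b hab
    exact hcinj (Fin.val_injective (Nat.cast_injective hab))
  have haff := aux_moment_affineIndependent _ hsinj
  have hcard : Fintype.card (Fin (n + 1)) =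
      Module.finrank ℝ (EuclideanSpace ℝ (Fin n)) + 1 := by
    simp [finrank_euclideanSpace_fin]
  have htop := haff.affineSpan_eq_top_iff_card_eq_finrank_add_one.mpr hcard
  have hrc : Set.range c = t := by
    ext a
    constructor
    · rintro ⟨i, rfl⟩; exact (e.symm i).2
    · intro ha; exact ⟨e ⟨a, ha⟩, by simp [hc]⟩
  have hrange : Set.range (fun i => (eqE n).symm (fun j => ((c i : ℕ) : ℝ) ^ ((j : ℕ) + 1)))
      = (fun i : Fin N => (eqE n).symm (fun j => ((i : ℕ) : ℝ) ^ ((j : ℕ) + 1))) '' t := by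
    rw [show (fun i => (eqE n).symm (fun j => ((c i : ℕ) : ℝ) ^ ((j : ℕ) + 1)))
        = (fun i : Fin N => (eqE n).symm (fun j => ((i : ℕ) : ℝ) ^ ((j : ℕ) + 1))) ∘ c from rfl,
      Set.range_comp, hrc]
  rw [hrange] at htop
  refine top_le_iff.mp ?_
  rw [← htop]
  exact affineSpan_mono ℝ (Set.image_mono htC)

lemma aux_det_ne_zero {n : ℕ} {p : Fin (n + 1) → EuclideanSpace ℝ (Fin n)}
    (hspan : affineSpan ℝ (Set.range p) = ⊤) :
    (Matrix.of fun i j : Fin n => eqE n (p i.succ) j - eqE n (p 0) j).det ≠ 0 := by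
  have hvtop := AffineSubspace.vectorSpan_eq_top_of_affineSpan_eq_top ℝ _ _ hspan
  have hfr : Module.finrank ℝ (vectorSpan ℝ (Set.range p)) = n := by
    rw [hvtop, finrank_top, finrank_euclideanSpace_fin]
  have haff : AffineIndependent ℝ p :=
    (affineIndependent_iff_finrank_vectorSpan_eq ℝ p (by simp)).mpr hfr
  have hli := (affineIndependent_iff_linearIndependent_vsub ℝ p 0).mp haff
  let g : Fin n → {x : Fin (n + 1) // x ≠ 0} := fun i => ⟨i.succ, Fin.succ_ne_zero i⟩
  have hginj : Function.Injective g := by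
    intro a b hab
    have : a.succ = b.succ := congrArg Subtype.val hab
    exact Fin.succ_injective _ this
  have hli2 := hli.comp g hginj
  have hli3 := hli2.map' (eqE n).toLinearMap (LinearEquiv.ker _)
  have hM : (fun i : Fin n =>
      (Matrix.of fun i j : Fin n => eqE n (p i.succ) j - eqE n (p 0) j) i)
      = (⇑(eqE n).toLinearMap ∘ ((fun i : {x : Fin (n + 1) // x ≠ 0} => p ↑i -ᵥ p 0) ∘ g)) := by
    funext i j
    simp [g, vsub_eq_sub, Matrix.of_apply]
  rw [← hM] at hli3
  have hunit : IsUnit (Matrix.of fun i j : Fin n => eqE n (p i.succ) j - eqE n (p 0) j) :=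
    Matrix.linearIndependent_rows_iff_isUnit.mp hli3
  exact ((Matrix.isUnit_iff_isUnit_det _).mp hunit).ne_zero

/-- Negation of one coordinate, as a linear equivalence of Euclidean space. -/
noncomputable def negc {n : ℕ} (j0 : Fin n) :
    EuclideanSpace ℝ (Fin n) ≃ₗ[ℝ] EuclideanSpace ℝ (Fin n) :=
  (eqE n).trans ((LinearEquiv.piCongrRight
    (fun j => if j = j0 then LinearEquiv.neg ℝ else LinearEquiv.refl ℝ ℝ)).trans (eqE n).symm)

lemma negc_apply {n : ℕ} (j0 : Fin n) (v : EuclideanSpace ℝ (Fin n)) (j : Fin n) :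
    eqE n (negc j0 v) j = if j = j0 then -(eqE n v j) else eqE n v j := by
  simp only [negc, LinearEquiv.trans_apply, LinearEquiv.apply_symm_apply,
    LinearEquiv.piCongrRight_apply]
  by_cases hj : j = j0 <;> simp [hj]

/-- `C` is a maximal strong component of the digraph `E` on `Fin N`:
it is the strong component of one of its vertices and is closed under
outgoing edges. -/
def IsMaxSCC {N : ℕ} (E : Fin N → Fin N → Prop) (C : Set (Fin N)) : Prop :=
  (∃ v ∈ C, C = {w | Relation.ReflTransGen E v w ∧ Relation.ReflTransGen E w v}) ∧
  (∀ u ∈ C, ∀ w : Fin N, E u w → w ∈ C)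

theorem Q_nonempty_not_pathConnected_of_critical_component
    {N n : ℕ} (hn : 1 ≤ n) (E : Fin N → Fin N → Prop)
    (hwc : ∀ i j : Fin N, Relation.ReflTransGen (fun a b => E a b ∨ E b a) i j)
    (hge : ∀ C : Set (Fin N), IsMaxSCC E C → n + 1 ≤ C.ncard)
    (hex : ∃ C : Set (Fin N), IsMaxSCC E C ∧ C.ncard = n + 1) :
    ({x : Fin N → EuclideanSpace ℝ (Fin n) |
        ∀ C : Set (Fin N), IsMaxSCC E C → affineSpan ℝ (x '' C) = ⊤}).Nonempty ∧
    ¬ IsPathConnected {x : Fin N → EuclideanSpace ℝ (Fin n) |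
        ∀ C : Set (Fin N), IsMaxSCC E C → affineSpan ℝ (x '' C) = ⊤} := by
  classical
  obtain ⟨C, hC, hCcard⟩ := hex
  set Q := {x : Fin N → EuclideanSpace ℝ (Fin n) |
      ∀ C : Set (Fin N), IsMaxSCC E C → affineSpan ℝ (x '' C) = ⊤} with hQdef
  have hcardC : Nat.card C = n + 1 := by rw [Nat.card_coe_set_eq, hCcard]
  let e : C ≃ Fin (n + 1) := Finite.equivFinOfCardEq hcardC
  let c : Fin (n + 1) → Fin N := fun i => (e.symm i : Fin N)
  have hrangec : Set.range c = C := by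
    ext a
    constructor
    · rintro ⟨i, rfl⟩; exact (e.symm i).2
    · intro ha; exact ⟨e ⟨a, ha⟩, by simp [c]⟩
  let x₀ : Fin N → EuclideanSpace ℝ (Fin n) :=
    fun i => (eqE n).symm (fun j => ((i : ℕ) : ℝ) ^ ((j : ℕ) + 1))
  have hx₀ : x₀ ∈ Q := by
    intro C' hC'
    exact aux_moment_span C' (hge C' hC')
  let f : (Fin N → EuclideanSpace ℝ (Fin n)) → ℝ := fun z =>
    (Matrix.of fun i j : Fin n => eqE n (z (c i.succ)) j - eqE n (z (c 0)) j).det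
  have hfQ : ∀ z ∈ Q, f z ≠ 0 := by
    intro z hz
    have hspan : affineSpan ℝ (Set.range (z ∘ c)) = ⊤ := by
      rw [Set.range_comp, hrangec]
      exact hz C hC
    exact aux_det_ne_zero hspan
  have hfcont : Continuous f := by
    apply Continuous.matrix_det
    apply continuous_matrix
    intro i j
    exact ((EuclideanSpace.proj j).continuous.comp (continuous_apply (c i.succ))).sub
      ((EuclideanSpace.proj j).continuous.comp (continuous_apply (c 0)))
  refine ⟨⟨x₀, hx₀⟩, ?_⟩
  intro hpc
  let j0 : Fin n := ⟨0, hn⟩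
  let y : Fin N → EuclideanSpace ℝ (Fin n) := fun i => negc j0 (x₀ i)
  have hy : y ∈ Q := by
    intro C' hC'
    have := AffineMap.span_eq_top_of_surjective
      (f := ((negc j0).toLinearMap).toAffineMap) ((negc j0).surjective) (hx₀ C' hC')
    rw [← Set.image_comp] at this
    simpa [y, Function.comp_def] using this
  have hfy : f y = - f x₀ := by
    have hM : (Matrix.of fun i j : Fin n => eqE n (y (c i.succ)) j - eqE n (y (c 0)) j)
        = Matrix.updateCol
            (Matrix.of fun i j : Fin n => eqE n (x₀ (c i.succ)) j - eqE n (x₀ (c 0)) j) j0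
            ((-1 : ℝ) • fun i =>
              (Matrix.of fun i j : Fin n => eqE n (x₀ (c i.succ)) j - eqE n (x₀ (c 0)) j) i j0) := by
      funext i j
      by_cases hj : j = j0
      · subst hj
        simp [y, Matrix.updateCol_apply, negc_apply, Matrix.of_apply]
        ring
      · simp [y, Matrix.updateCol_apply, hj, negc_apply, Matrix.of_apply]
    show (Matrix.of fun i j : Fin n => eqE n (y (c i.succ)) j - eqE n (y (c 0)) j).det = _
    rw [hM, Matrix.det_updateCol_smul, Matrix.updateCol_eq_self]
    simp [f]
  obtain ⟨γ, hγ⟩ := hpc.joinedIn x₀ hx₀ y hy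
  have hg : Continuous fun t => f (γ t) := hfcont.comp γ.continuous
  have hxne := hfQ x₀ hx₀
  have h01 : f (γ 0) = f x₀ := by rw [γ.source]
  have h11 : f (γ 1) = - f x₀ := by rw [γ.target, hfy]
  have h0 : (0 : ℝ) ∈ Set.range fun t => f (γ t) := by
    rcases hxne.lt_or_gt with hlt | hlt
    · refine intermediate_value_univ 0 1 hg ?_
      rw [Set.mem_Icc, h01, h11]
      constructor <;> linarith
    · refine intermediate_value_univ 1 0 hg ?_
      rw [Set.mem_Icc, h01, h11]
      constructor <;> linarith
  obtain ⟨t, ht⟩ := h0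
  exact hfQ (γ t) (hγ t) ht
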